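/- arXiv:2301.01412 — 2 statements merged into one kernel-verified Lean document; each statement's English description precedes it below -/
import Mathlib

section
/- Let R be a symmetric positive semidefinite p×p real matrix, δ > 0, and k a positive integer. Define the kp×kp block matrix Σ whose (r,s) block is R + δ²I_p if r = s and R otherwise. Then Σ is invertible and Σ^{-1} = (1/(δ²k)) (k I_{kp} − V (I_p − R_δ^{-1}) Vᵀ), where R_δ = I_p + (k/δ²)R and V = [I_p; I_p; ...; I_p] is the kp×p stacked identity. -/
open Matrix

/-- For R symmetric PSD, δ > 0, k ≥ 1, the kp×kp block matrix Σ
(diagonal blocks R + δ²I, off-diagonal blocks R) is invertible with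
Σ⁻¹ = (1/(δ²k)) (k I − V (I − R_δ⁻¹) Vᵀ), where R_δ = I + (k/δ²) R and V is the
vertical stack of k copies of I_p. -/
theorem stmt_3 (p k : ℕ) (hk : 0 < k) (δ : ℝ) (hδ : 0 < δ)
    (R : Matrix (Fin p) (Fin p) ℝ) (hR : R.PosSemidef)
    (Sg : Matrix (Fin k × Fin p) (Fin k × Fin p) ℝ)
    (hSg : ∀ x y, Sg x y = R x.2 y.2 + if x = y then δ ^ 2 else 0)
    (V : Matrix (Fin k × Fin p) (Fin p) ℝ)
    (hV : ∀ x b, V x b = if x.2 = b then (1 : ℝ) else 0)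
    (Rδ : Matrix (Fin p) (Fin p) ℝ)
    (hRδ : Rδ = 1 + ((k : ℝ) / δ ^ 2) • R) :
    IsUnit Sg.det ∧
      Sg⁻¹ = ((δ ^ 2 * (k : ℝ))⁻¹) •
        ((k : ℝ) • (1 : Matrix (Fin k × Fin p) (Fin k × Fin p) ℝ)
          - V * (1 - Rδ⁻¹) * Vᵀ) := by
  have hδ2 : (0:ℝ) < δ ^ 2 := by positivity
  -- Sg = V R Vᵀ + δ² I
  have hSg' : Sg = V * R * Vᵀ + (δ ^ 2) • 1 := by
    ext x y
    have : ∀ b : Fin p, (V * R) x b = R x.2 b := by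
      intro b
      simp [mul_apply, hV, ite_mul]
    simp only [Matrix.add_apply, mul_apply, transpose_apply, this, hV, Matrix.smul_apply, one_apply,
      smul_eq_mul, hSg]
    rw [Finset.sum_congr rfl (fun b _ => by rw [mul_ite, mul_one, mul_zero])]
    simp [Prod.ext_iff, eq_comm]
  -- Vᵀ V = k I
  have hVtV : Vᵀ * V = (k : ℝ) • 1 := by
    ext a b
    simp only [mul_apply, transpose_apply, hV, Matrix.smul_apply, one_apply, smul_eq_mul]
    rw [Fintype.sum_prod_type]
    by_cases h : a = b <;> simp [h, ite_and, eq_comm]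
  -- Rδ is positive definite, hence has unit determinant
  have hcR : (((k : ℝ) / δ ^ 2) • R).PosSemidef := by
    have hherm : (((k : ℝ) / δ ^ 2) • R).IsHermitian := by
      unfold Matrix.IsHermitian
      rw [conjTranspose_smul, star_trivial, hR.1]
    refine ⟨hherm, fun x => ?_⟩
    convert mul_nonneg (by positivity : (0:ℝ) ≤ (k : ℝ) / δ ^ 2) (hR.2 x) using 1
    simp only [Finsupp.mul_sum, Matrix.smul_apply, smul_eq_mul, star_trivial]
    exact Finsupp.sum_congr fun i _ => Finsupp.sum_congr fun j _ => by ring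
  have hRδpd : Rδ.PosDef := by
    rw [hRδ]
    exact Matrix.PosDef.add_posSemidef Matrix.PosDef.one hcR
  have hdet : IsUnit Rδ.det := hRδpd.det_pos.ne'.isUnit
  have hRδinv : Rδ * Rδ⁻¹ = 1 := Matrix.mul_nonsing_inv _ hdet
  -- (k R + δ² I) Rδ⁻¹ = δ² I
  have h1 : (k : ℝ) • R + (δ ^ 2) • (1 : Matrix (Fin p) (Fin p) ℝ) = (δ ^ 2) • Rδ := by
    rw [hRδ, smul_add, smul_smul]
    rw [mul_div_cancel₀ _ hδ2.ne']
    exact add_comm _ _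
  have h2 : ((k : ℝ) • R + (δ ^ 2) • 1) * Rδ⁻¹ = (δ ^ 2) • (1 : Matrix (Fin p) (Fin p) ℝ) := by
    rw [h1, Matrix.smul_mul, hRδinv]
  -- key middle-factor computation
  have h3 : ((k : ℝ) • R + (δ ^ 2) • 1) * (1 - Rδ⁻¹) = (k : ℝ) • R := by
    rw [Matrix.mul_sub, Matrix.mul_one, h2, add_sub_cancel_right]
  -- Sg * V = V * (k R + δ² I)
  have h4 : Sg * V = V * ((k : ℝ) • R + (δ ^ 2) • 1) := by
    rw [hSg', Matrix.add_mul, Matrix.smul_mul, Matrix.one_mul, Matrix.mul_assoc,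
      Matrix.mul_assoc, hVtV, Matrix.mul_smul, Matrix.mul_one, Matrix.mul_add,
      Matrix.mul_smul, Matrix.mul_smul, Matrix.mul_one]
  -- Sg times the unscaled candidate inverse
  have key : Sg * ((k : ℝ) • (1 : Matrix (Fin k × Fin p) (Fin k × Fin p) ℝ)
      - V * (1 - Rδ⁻¹) * Vᵀ) = (δ ^ 2 * (k : ℝ)) • 1 := by
    have e1 : Sg * (V * (1 - Rδ⁻¹) * Vᵀ) = (k : ℝ) • (V * R * Vᵀ) := by
      rw [Matrix.mul_assoc V, ← Matrix.mul_assoc Sg, h4, Matrix.mul_assoc V,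
        ← Matrix.mul_assoc _ (1 - Rδ⁻¹), h3, Matrix.smul_mul, Matrix.mul_smul,
        ← Matrix.mul_assoc]
    rw [Matrix.mul_sub, Matrix.mul_smul, Matrix.mul_one, e1, hSg', smul_add]
    module
  have hδk : (δ ^ 2 * (k : ℝ)) ≠ 0 := by positivity
  have hinv : Sg * (((δ ^ 2 * (k : ℝ))⁻¹) •
      ((k : ℝ) • (1 : Matrix (Fin k × Fin p) (Fin k × Fin p) ℝ)
        - V * (1 - Rδ⁻¹) * Vᵀ)) = 1 := by
    rw [Matrix.mul_smul, key, smul_smul, inv_mul_cancel₀ hδk, one_smul]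
  exact ⟨Matrix.isUnit_det_of_right_inverse hinv,
    Matrix.inv_eq_right_inv hinv⟩
end

section
/- The periodic kernel k(s,t) = exp(-θ² sin²(π(s−t)/T)) is a valid positive semidefinite kernel on ℝ: for any finite set of points t_1,...,t_n and any real vector a, Σ_{i,j} a_i a_j k(t_i, t_j) ≥ 0. -/
open Finset

lemma psd_pow_aux {n : ℕ} (m : ℕ) (a : Fin n → ℝ) (φ : Fin 2 → Fin n → ℝ) :
    0 ≤ ∑ i, ∑ j, a i * a j * (∑ k, φ k i * φ k j) ^ m := by
  have hexp : ∀ i j : Fin n, (∑ k, φ k i * φ k j) ^ m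
      = ∑ f ∈ Fintype.piFinset (fun _ : Fin m => (univ : Finset (Fin 2))),
          (∏ l, φ (f l) i) * (∏ l, φ (f l) j) := by
    intro i j
    rw [← Fin.prod_const m, Finset.prod_univ_sum]
    exact Finset.sum_congr rfl fun f _ => by rw [← Finset.prod_mul_distrib]
  calc (0:ℝ) ≤ ∑ f ∈ Fintype.piFinset (fun _ : Fin m => (univ : Finset (Fin 2))),
        (∑ i, a i * ∏ l, φ (f l) i) ^ 2 :=
        Finset.sum_nonneg fun f _ => sq_nonneg _
    _ = ∑ i, ∑ j, a i * a j * (∑ k, φ k i * φ k j) ^ m := by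
        simp only [hexp, Finset.mul_sum, sq, Finset.sum_mul]
        rw [Finset.sum_comm]
        refine Finset.sum_congr rfl fun i _ => ?_
        rw [Finset.sum_comm]
        refine Finset.sum_congr rfl fun j _ => Finset.sum_congr rfl fun f _ => by ring

/-- The periodic kernel k(s,t) = exp(-θ² sin²(π(s−t)/T)) is a
positive semidefinite kernel on ℝ: for any points t₁,...,t_n and reals a_i,
Σ_{i,j} a_i a_j k(t_i, t_j) ≥ 0. -/
theorem stmt_16 (θ T : ℝ) (hT : 0 < T) (n : ℕ) (t : Fin n → ℝ) (a : Fin n → ℝ) :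
    0 ≤ ∑ i : Fin n, ∑ j : Fin n,
      a i * a j * Real.exp (-θ ^ 2 * Real.sin (Real.pi * (t i - t j) / T) ^ 2) := by
  set c : ℝ := θ ^ 2 / 2 with hc
  have hc0 : 0 ≤ c := by positivity
  set φ : Fin 2 → Fin n → ℝ := fun k i =>
    if k = 0 then Real.cos (2 * Real.pi * t i / T) else Real.sin (2 * Real.pi * t i / T) with hφ
  set B : Fin n → Fin n → ℝ := fun i j => ∑ k, φ k i * φ k j with hB
  have hBval : ∀ i j, B i j = Real.cos (2 * Real.pi * (t i - t j) / T) := by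
    intro i j
    rw [hB]
    simp only [hφ, Fin.sum_univ_two]
    norm_num
    rw [show 2 * Real.pi * (t i - t j) / T
        = 2 * Real.pi * t i / T - 2 * Real.pi * t j / T by ring, Real.cos_sub]
  have hker : ∀ i j, Real.exp (-θ ^ 2 * Real.sin (Real.pi * (t i - t j) / T) ^ 2)
      = Real.exp (-c) * Real.exp (c * B i j) := by
    intro i j
    rw [← Real.exp_add, hBval]
    congr 1
    rw [Real.sin_sq_eq_half_sub]
    rw [show 2 * (Real.pi * (t i - t j) / T) = 2 * Real.pi * (t i - t j) / T by ring]
    ring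
  have hexp_tsum : ∀ x : ℝ, Real.exp x = ∑' m : ℕ, x ^ m / m.factorial := by
    intro x
    rw [Real.exp_eq_exp_ℝ, NormedSpace.exp_eq_tsum_div]
  have hsummable : ∀ x : ℝ, Summable (fun m : ℕ => x ^ m / m.factorial) :=
    Real.summable_pow_div_factorial
  have key : 0 ≤ ∑ i, ∑ j, a i * a j * Real.exp (c * B i j) := by
    have h1 : ∀ i j : Fin n, a i * a j * Real.exp (c * B i j)
        = ∑' m : ℕ, a i * a j * ((c * B i j) ^ m / m.factorial) := by
      intro i j
      rw [hexp_tsum, ← tsum_mul_left]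
    calc (0:ℝ) ≤ ∑' m : ℕ, ∑ i, ∑ j, a i * a j * ((c * B i j) ^ m / m.factorial) := by
          refine tsum_nonneg fun m => ?_
          have : ∀ i j : Fin n, a i * a j * ((c * B i j) ^ m / m.factorial)
              = (c ^ m / m.factorial) * (a i * a j * B i j ^ m) := by
            intro i j; rw [mul_pow]; ring
          simp only [this, ← Finset.mul_sum]
          exact mul_nonneg (by positivity) (psd_pow_aux m a φ)
      _ = ∑ i, ∑ j, a i * a j * Real.exp (c * B i j) := by
          rw [Summable.tsum_finsetSum (fun i _ =>
            summable_sum (fun j _ => ((hsummable (c * B i j)).mul_left _)))]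
          refine Finset.sum_congr rfl fun i _ => ?_
          rw [Summable.tsum_finsetSum (fun j _ => ((hsummable (c * B i j)).mul_left _))]
          exact Finset.sum_congr rfl fun j _ => (h1 i j).symm
  calc (0:ℝ) ≤ Real.exp (-c) * ∑ i, ∑ j, a i * a j * Real.exp (c * B i j) :=
        mul_nonneg (Real.exp_pos _).le key
    _ = _ := by
        rw [Finset.mul_sum]
        refine Finset.sum_congr rfl fun i _ => ?_
        rw [Finset.mul_sum]
        exact Finset.sum_congr rfl fun j _ => by rw [hker i j]; ring
end
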